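/- Neither the graph G1 (a 12-cycle plus a vertex u adjacent to v1, v2, v6) nor the graph G2 (a 12-cycle plus an internal triangle joined by edges u1v1, u2v4, u3v7) contains a cycle of length 4, 5, or 8. -/

import Mathlib

/-- The graph `G1`: the 12-cycle `v1 … v12` (vertices `0, …, 11`) together with one
additional vertex `u` (vertex `12`) adjacent to `v1`, `v2`, `v6`. -/
def G1 : SimpleGraph (Fin 13) :=
  SimpleGraph.fromRel (fun a b =>
    ((a : ℕ) < 12 ∧ (b : ℕ) < 12 ∧ (b : ℕ) = ((a : ℕ) + 1) % 12) ∨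
    (a = 12 ∧ (b = 0 ∨ b = 1 ∨ b = 5)))

/-- The graph `G2`: the 12-cycle `v1 … v12` (vertices `0, …, 11`), a triangle
`u1 u2 u3` (vertices `12, 13, 14`), and the edges `u1 v1`, `u2 v4`, `u3 v7`. -/
def G2 : SimpleGraph (Fin 15) :=
  SimpleGraph.fromRel (fun a b =>
    ((a : ℕ) < 12 ∧ (b : ℕ) < 12 ∧ (b : ℕ) = ((a : ℕ) + 1) % 12) ∨
    ((a = 12 ∧ b = 13) ∨ (a = 13 ∧ b = 14) ∨ (a = 14 ∧ b = 12)) ∨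
    ((a = 12 ∧ b = 0) ∨ (a = 13 ∧ b = 3) ∨ (a = 14 ∧ b = 6)))

/-- Brute-force search: `cycExt f v0 m c visited = true` iff there is a path of `m` more
steps from `c`, avoiding `visited`, ending at a vertex adjacent (via `f`) to `v0`. -/
def cycExt {n : ℕ} (f : Fin n → Fin n → Bool) (v0 : Fin n) :
    ℕ → Fin n → List (Fin n) → Bool
  | 0, c, _ => f c v0
  | m+1, c, visited =>
      (List.finRange n).any fun w =>
        f c w && !(decide (w ∈ visited)) && cycExt f v0 m w (w :: visited)

/-- `cycChk f k = true` iff the search finds a cycle of length `k`. -/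
def cycChk {n : ℕ} (f : Fin n → Fin n → Bool) (k : ℕ) : Bool :=
  (List.finRange n).any fun v => cycExt f v (k - 1) v [v]

lemma cycExt_of_list {n : ℕ} (f : Fin n → Fin n → Bool) (v0 : Fin n) :
    ∀ (l : List (Fin n)) (c : Fin n) (visited : List (Fin n)),
      List.Chain (fun a b => f a b = true) c l →
      f ((c :: l).getLast (by simp)) v0 = true →
      l.Nodup → (∀ x ∈ l, x ∉ visited) →
      cycExt f v0 l.length c visited = true := by
  intro l
  induction l with
  | nil =>
      intro c visited _ hlast _ _
      simpa [cycExt] using hlast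
  | cons w l' ih =>
      intro c visited hchain hlast hnd hvis
      replace hchain : f c w = true ∧ List.Chain (fun a b => f a b = true) w l' :=
        List.isChain_cons_cons.mp hchain
      have hwvis : w ∉ visited := hvis w (by simp)
      have hrec : cycExt f v0 l'.length w (w :: visited) = true := by
        refine ih w (w :: visited) hchain.2 ?_ (List.nodup_cons.mp hnd).2 ?_
        · simpa [List.getLast_cons] using hlast
        · intro x hx
          simp only [List.mem_cons, not_or]
          exact ⟨fun h => (List.nodup_cons.mp hnd).1 (h ▸ hx),
            hvis x (List.mem_cons_of_mem _ hx)⟩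
      show cycExt f v0 (l'.length + 1) c visited = true
      rw [cycExt, List.any_eq_true]
      exact ⟨w, List.mem_finRange w, by simp [hchain.1, hwvis, hrec]⟩

lemma no_cycle_of_chk {n : ℕ} (G : SimpleGraph (Fin n)) (f : Fin n → Fin n → Bool)
    (hf : ∀ a b, G.Adj a b → f a b = true) (k : ℕ) (hk : 1 ≤ k)
    (hchk : cycChk f k = false) :
    ∀ (v : Fin n) (w : G.Walk v v), w.IsCycle → w.length ≠ k := by
  intro v w hw hlen
  obtain ⟨t, ht⟩ : ∃ t, w.support.tail = t := ⟨_, rfl⟩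
  have hs : w.support = v :: t := by rw [w.support_eq_cons, ht]
  have htlen : t.length = k := by
    have := w.length_support
    rw [hs] at this
    simp only [List.length_cons] at this
    omega
  have htne : t ≠ [] := by
    intro h; rw [h] at htlen; simp at htlen; omega
  have hsl : w.support.getLast? = some v := by
    rw [List.getLast?_eq_getLast (by simp), w.getLast_support]
  have htl : t.getLast? = some v := by
    rw [hs] at hsl
    obtain ⟨b, t', rfl⟩ : ∃ b t', t = b :: t' := by
      cases t with
      | nil => exact absurd rfl htne
      | cons b t' => exact ⟨b, t', rfl⟩
    rwa [List.getLast?_cons_cons] at hsl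
  have htlast : t.getLast htne = v := by
    rw [List.getLast?_eq_getLast htne] at htl
    exact Option.some_injective _ htl
  obtain ⟨l, hl⟩ : ∃ l, t.dropLast = l := ⟨_, rfl⟩
  have hteq : t = l ++ [v] := by
    rw [← hl, ← htlast]; exact (List.dropLast_append_getLast htne).symm
  have hnd : t.Nodup := ht ▸ hw.support_nodup
  have hchain : List.IsChain G.Adj w.support := w.isChain_adj_support
  rw [hs, hteq, ← List.cons_append, List.isChain_append] at hchain
  obtain ⟨h1, -, h3⟩ := hchain
  have hne2 : (v :: l) ≠ [] := by simp
  have hlastadj : G.Adj ((v :: l).getLast hne2) v := by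
    apply h3
    · rw [List.getLast?_eq_getLast hne2]; rfl
    · simp
  have hchainl : List.Chain G.Adj v l := h1
  have hndl : l.Nodup := List.Nodup.sublist (hl ▸ List.dropLast_sublist t) hnd
  have hvnl : v ∉ l := by
    rw [hteq, List.nodup_append] at hnd
    intro hmem
    exact hnd.2.2 v hmem v (by simp) rfl
  have hlen' : l.length = k - 1 := by
    have : t.length = l.length + 1 := by rw [hteq]; simp
    omega
  have hext : cycExt f v (k - 1) v [v] = true := by
    rw [← hlen']
    refine cycExt_of_list f v l v [v] ?_ ?_ hndl ?_
    · exact List.Chain.imp (fun a b h => hf a b h) hchainl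
    · exact hf _ _ hlastadj
    · intro x hx
      simp only [List.mem_singleton]
      intro h; exact hvnl (h ▸ hx)
  have : cycChk f k = true := by
    rw [cycChk, List.any_eq_true]
    exact ⟨v, List.mem_finRange v, hext⟩
  rw [hchk] at this
  exact absurd this (by simp)

def f1 : Fin 13 → Fin 13 → Bool := fun a b =>
  decide (a ≠ b) &&
  (decide (((a : ℕ) < 12 ∧ (b : ℕ) < 12 ∧ (b : ℕ) = ((a : ℕ) + 1) % 12) ∨
    (a = 12 ∧ (b = 0 ∨ b = 1 ∨ b = 5))) ||
   decide (((b : ℕ) < 12 ∧ (a : ℕ) < 12 ∧ (a : ℕ) = ((b : ℕ) + 1) % 12) ∨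
    (b = 12 ∧ (a = 0 ∨ a = 1 ∨ a = 5))))

def f2 : Fin 15 → Fin 15 → Bool := fun a b =>
  decide (a ≠ b) &&
  (decide (((a : ℕ) < 12 ∧ (b : ℕ) < 12 ∧ (b : ℕ) = ((a : ℕ) + 1) % 12) ∨
    ((a = 12 ∧ b = 13) ∨ (a = 13 ∧ b = 14) ∨ (a = 14 ∧ b = 12)) ∨
    ((a = 12 ∧ b = 0) ∨ (a = 13 ∧ b = 3) ∨ (a = 14 ∧ b = 6))) ||
   decide (((b : ℕ) < 12 ∧ (a : ℕ) < 12 ∧ (a : ℕ) = ((b : ℕ) + 1) % 12) ∨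
    ((b = 12 ∧ a = 13) ∨ (b = 13 ∧ a = 14) ∨ (b = 14 ∧ a = 12)) ∨
    ((b = 12 ∧ a = 0) ∨ (b = 13 ∧ a = 3) ∨ (b = 14 ∧ a = 6))))

lemma hf1 : ∀ a b, G1.Adj a b → f1 a b = true := by
  intro a b h
  rw [G1, SimpleGraph.fromRel_adj] at h
  simp only [f1, Bool.and_eq_true, Bool.or_eq_true, decide_eq_true_eq]
  tauto

lemma hf2 : ∀ a b, G2.Adj a b → f2 a b = true := by
  intro a b h
  rw [G2, SimpleGraph.fromRel_adj] at h
  simp only [f2, Bool.and_eq_true, Bool.or_eq_true, decide_eq_true_eq]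
  tauto

/-- Neither `G1` nor `G2` contains a cycle of length 4, 5, or 8. -/
theorem stmt4 :
    (∀ (v : Fin 13) (w : G1.Walk v v), w.IsCycle →
      w.length ≠ 4 ∧ w.length ≠ 5 ∧ w.length ≠ 8) ∧
    (∀ (v : Fin 15) (w : G2.Walk v v), w.IsCycle →
      w.length ≠ 4 ∧ w.length ≠ 5 ∧ w.length ≠ 8) := by
  constructor
  · intro v w hw
    exact ⟨no_cycle_of_chk G1 f1 hf1 4 (by norm_num) (by decide) v w hw,
      no_cycle_of_chk G1 f1 hf1 5 (by norm_num) (by decide) v w hw,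
      no_cycle_of_chk G1 f1 hf1 8 (by norm_num) (by decide) v w hw⟩
  · intro v w hw
    exact ⟨no_cycle_of_chk G2 f2 hf2 4 (by norm_num) (by decide) v w hw,
      no_cycle_of_chk G2 f2 hf2 5 (by norm_num) (by decide) v w hw,
      no_cycle_of_chk G2 f2 hf2 8 (by norm_num) (by decide) v w hw⟩
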